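/- If the sequence of partial sums (sₙ) is Cauchy, then for every sequence (xₘ) in [0,1) with xₘ → 1, one has |F(xₘ) − sₙ| → 0 as m,n → ∞ (i.e., for all ε > 0 there is N with |F(xₘ) − sₙ| ≤ ε for all m,n ≥ N). -/

import Mathlib

open Filter Topology

theorem abel_cauchy_variant (a : ℕ → ℝ)
    (hC : CauchySeq (fun n => ∑ i ∈ Finset.range (n+1), a i)) :
    ∀ x : ℕ → ℝ, (∀ m, x m ∈ Set.Ico (0:ℝ) 1) → Tendsto x atTop (nhds 1) →
      ∀ ε : ℝ, 0 < ε → ∃ N, ∀ m n, N ≤ m → N ≤ n →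
        |(∑' i, a i * (x m)^i) - ∑ i ∈ Finset.range (n+1), a i| ≤ ε := by
  intro x hx hx1 ε hε
  obtain ⟨l, hl⟩ := cauchySeq_tendsto_of_complete hC
  have hl' : Tendsto (fun n => ∑ i ∈ Finset.range n, a i) atTop (𝓝 l) :=
    (tendsto_add_atTop_iff_nat 1).mp hl
  have habel := Real.tendsto_tsum_powerSeries_nhdsWithin_lt hl'
  have hxlt : Tendsto x atTop (𝓝[<] 1) :=
    tendsto_nhdsWithin_of_tendsto_nhds_of_eventually_within _ hx1
      (Eventually.of_forall fun m => (hx m).2)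
  have hF : Tendsto (fun m => ∑' i, a i * (x m)^i) atTop (𝓝 l) := habel.comp hxlt
  have h1 := (hF.eventually (Metric.closedBall_mem_nhds l (half_pos hε))).exists_forall_of_atTop
  have h2 := (hl.eventually (Metric.closedBall_mem_nhds l (half_pos hε))).exists_forall_of_atTop
  obtain ⟨N1, hN1⟩ := h1
  obtain ⟨N2, hN2⟩ := h2
  refine ⟨max N1 N2, fun m n hm hn => ?_⟩
  have e1 := hN1 m (le_trans (le_max_left _ _) hm)
  have e2p := hN2 n (le_trans (le_max_right _ _) hn)
  simp only [Metric.mem_closedBall, Real.dist_eq] at e1 e2p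
  calc |(∑' i, a i * (x m)^i) - ∑ i ∈ Finset.range (n+1), a i|
      ≤ |(∑' i, a i * (x m)^i) - l| + |l - ∑ i ∈ Finset.range (n+1), a i| := abs_sub_le _ _ _
    _ ≤ ε/2 + ε/2 := add_le_add e1 (by rwa [abs_sub_comm])
    _ = ε := add_halves ε
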